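/- In the G/G/m queue, the departure times satisfy the explicit recursion D k = (min over all index tuples 1 ≤ j₁ < ⋯ < j_k ≤ k+m−2 of (C_{j₁} ⊔ ⋯ ⊔ C_{j_k})) ⊓ C_{k+m−1}, i.e., the k-th smallest element of {C 1, …, C (k+m−1)} equals the minimum of the k-th smallest element of {C 1, …, C (k+m−2)} and C (k+m−1). -/

import Mathlib

/-- `orderStat f k` is the `k`-th smallest value (0-indexed, ties counted with
multiplicity) of the finite sequence `f`. -/
noncomputable def orderStat {n : ℕ} (f : Fin n → ℝ) (k : Fin n) : ℝ :=
  f (Tuple.sort f k)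

open Finset

lemma osPigeon {N k : ℕ} (hk : 1 ≤ k) (hkN : k - 1 < N) (f : Fin N → ℝ)
    (j : Fin k → Fin N) (hj : Function.Injective j)
    (H : (univ : Finset (Fin k)).Nonempty) :
    orderStat f ⟨k - 1, hkN⟩ ≤ univ.sup' H (fun i => f (j i)) := by
  set σ := Tuple.sort f with hσ
  have hmono := Tuple.monotone_sort f
  have hex : ∃ i : Fin k, k - 1 ≤ (σ.symm (j i)).1 := by
    by_contra h
    push_neg at h
    have hinj : Function.Injective
        (fun i : Fin k => (⟨(σ.symm (j i)).1, h i⟩ : Fin (k - 1))) := by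
      intro a b hab
      simp only [Fin.mk.injEq] at hab
      exact hj (σ.symm.injective (Fin.ext hab))
    have := Fintype.card_le_of_injective _ hinj
    simp only [Fintype.card_fin] at this
    omega
  obtain ⟨i, hi⟩ := hex
  have h1 : orderStat f ⟨k - 1, hkN⟩ ≤ f (j i) := by
    have h2 : f (j i) = (f ∘ σ) (σ.symm (j i)) := by
      simp [Function.comp, Equiv.apply_symm_apply]
    rw [h2]
    exact hmono (show (⟨k - 1, hkN⟩ : Fin N) ≤ σ.symm (j i) from hi)
  exact h1.trans (le_sup' (fun i => f (j i)) (mem_univ i))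

lemma osWitness {N k : ℕ} (hk : 1 ≤ k) (hkN : k ≤ N) (f : Fin N → ℝ)
    (H : (univ : Finset (Fin k)).Nonempty) :
    ∃ j : Fin k → Fin N, StrictMono j ∧
      univ.sup' H (fun i => f (j i)) = orderStat f ⟨k - 1, by omega⟩ := by
  have hmono := Tuple.monotone_sort f
  have hcard : (image (fun i : Fin k => Tuple.sort f (Fin.castLE hkN i)) univ).card = k := by
    rw [card_image_of_injective _
      (fun a b hab => Fin.castLE_injective hkN ((Tuple.sort f).injective hab)),
      card_univ, Fintype.card_fin]
  refine ⟨(image (fun i : Fin k => Tuple.sort f (Fin.castLE hkN i)) univ).orderEmbOfFin hcard,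
    (Finset.orderEmbOfFin _ hcard).strictMono, le_antisymm ?_ ?_⟩
  · apply sup'_le
    intro i _
    have hmem := Finset.orderEmbOfFin_mem _ hcard i
    rw [mem_image] at hmem
    obtain ⟨i', -, hi'⟩ := hmem
    have h3 : f ((Finset.orderEmbOfFin _ hcard) i)
        = (f ∘ ⇑(Tuple.sort f)) (Fin.castLE hkN i') := congrArg f hi'.symm
    exact le_of_eq_of_le h3 (hmono (show Fin.castLE hkN i' ≤ (⟨k - 1, by omega⟩ : Fin N) from by
      simp [Fin.le_def]; omega))
  · have hmem : Tuple.sort f (Fin.castLE hkN ⟨k - 1, by omega⟩)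
        ∈ image (fun i : Fin k => Tuple.sort f (Fin.castLE hkN i)) univ :=
      mem_image.mpr ⟨⟨k - 1, by omega⟩, mem_univ _, rfl⟩
    have hmem2 : Tuple.sort f (Fin.castLE hkN ⟨k - 1, by omega⟩)
        ∈ Set.range (Finset.orderEmbOfFin _ hcard) := by
      rw [Finset.range_orderEmbOfFin]
      exact hmem
    obtain ⟨i₀, hi₀⟩ := hmem2
    have h4 : orderStat f ⟨k - 1, by omega⟩ = f ((Finset.orderEmbOfFin _ hcard) i₀) := by
      rw [hi₀]; rfl
    rw [h4]
    exact le_sup' (fun i => f ((Finset.orderEmbOfFin _ hcard) i)) (mem_univ i₀)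

lemma osInf {N k : ℕ} (hk : 1 ≤ k) (hkN : k ≤ N) (f : Fin N → ℝ)
    (Hf : (univ.filter
      (fun j : Fin k → Fin N => ∀ a b : Fin k, a < b → j a < j b)).Nonempty)
    (H : (univ : Finset (Fin k)).Nonempty) :
    (univ.filter (fun j : Fin k → Fin N => ∀ a b : Fin k, a < b → j a < j b)).inf' Hf
      (fun j => univ.sup' H (fun i => f (j i))) = orderStat f ⟨k - 1, by omega⟩ := by
  apply le_antisymm
  · obtain ⟨j, hj, hjs⟩ := osWitness hk hkN f H
    have hmem : j ∈ univ.filter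
        (fun j : Fin k → Fin N => ∀ a b : Fin k, a < b → j a < j b) :=
      mem_filter.mpr ⟨mem_univ _, fun a b h => hj h⟩
    exact (inf'_le _ hmem).trans hjs.le
  · apply le_inf'
    intro j hj
    rw [mem_filter] at hj
    exact osPigeon hk (by omega) f j
      (StrictMono.injective (fun a b h => hj.2 a b h)) H

lemma osCongr {a b : ℕ} (h : a = b) (C : ℕ → ℝ) (x : ℕ) (hx : x < a) (hx' : x < b) :
    orderStat (fun i : Fin a => C (i.1 + 1)) ⟨x, hx⟩
      = orderStat (fun i : Fin b => C (i.1 + 1)) ⟨x, hx'⟩ := by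
  subst h; rfl

lemma osLast {N : ℕ} (hN : 1 ≤ N) (f : Fin N → ℝ)
    (H : (univ : Finset (Fin N)).Nonempty) :
    orderStat f ⟨N - 1, by omega⟩ = univ.sup' H f := by
  have hmono := Tuple.monotone_sort f
  apply le_antisymm
  · exact le_sup' f (mem_univ _)
  · apply sup'_le
    intro i _
    have h2 : f i = (f ∘ ⇑(Tuple.sort f)) ((Tuple.sort f).symm i) := by
      simp [Function.comp, Equiv.apply_symm_apply]
    exact le_of_eq_of_le h2 (hmono (show (Tuple.sort f).symm i ≤ (⟨N - 1, by omega⟩ : Fin N)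
      from by
        rw [Fin.le_def]
        show ((Tuple.sort f).symm i).1 ≤ N - 1
        have := ((Tuple.sort f).symm i).isLt
        omega))

lemma osIns {N n : ℕ} (hNn : N = n + 1) (f : Fin N → ℝ) (k : ℕ) (hkn : k < n)
    (hyp : k = 0 ∨ (1 ≤ k ∧
      orderStat (fun i : Fin n => f ⟨i.1, by omega⟩) ⟨k - 1, by omega⟩ ≤ f ⟨n, by omega⟩)) :
    orderStat f ⟨k, by omega⟩ =
      orderStat (fun i : Fin n => f ⟨i.1, by omega⟩) ⟨k, hkn⟩ ⊓ f ⟨n, by omega⟩ := by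
  subst hNn
  set f' : Fin n → ℝ := fun i => f ⟨i.1, by omega⟩ with hf'
  have H2 : (univ : Finset (Fin (k + 1))).Nonempty := ⟨⟨0, by omega⟩, mem_univ _⟩
  have hkN : k + 1 ≤ n + 1 := by omega
  obtain ⟨w, hw, -⟩ := osWitness (k := k + 1) (N := n + 1) (by omega) hkN f H2
  have Hf : (univ.filter
      (fun j : Fin (k + 1) → Fin (n + 1) => ∀ a b : Fin (k + 1), a < b → j a < j b)).Nonempty :=
    ⟨w, mem_filter.mpr ⟨mem_univ _, fun a b h => hw h⟩⟩
  have key := osInf (k := k + 1) (N := n + 1) (by omega) hkN f Hf H2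
  have hidx : (⟨k + 1 - 1, by omega⟩ : Fin (n + 1)) = ⟨k, by omega⟩ := Fin.ext (by simp)
  rw [hidx] at key
  rw [← key]
  apply le_antisymm
  · apply le_inf
    · obtain ⟨w', hw', hws'⟩ := osWitness (k := k + 1) (N := n) (by omega) (by omega) f' H2
      have hidx' : (⟨k + 1 - 1, by omega⟩ : Fin n) = ⟨k, hkn⟩ := Fin.ext (by simp)
      rw [hidx'] at hws'
      have hmem : (fun i : Fin (k + 1) => (⟨(w' i).1, by omega⟩ : Fin (n + 1))) ∈
          univ.filter (fun j : Fin (k + 1) → Fin (n + 1) =>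
            ∀ a b : Fin (k + 1), a < b → j a < j b) :=
        mem_filter.mpr ⟨mem_univ _, fun a b h => by
          simp only [Fin.lt_def]
          exact hw' h⟩
      exact (inf'_le _ hmem).trans (le_of_eq hws')
    · rcases hyp with hk0 | ⟨hk1, hle⟩
      · subst hk0
        have hmem : (fun _ : Fin 1 => (⟨n, by omega⟩ : Fin (n + 1))) ∈
            univ.filter (fun j : Fin 1 → Fin (n + 1) =>
              ∀ a b : Fin 1, a < b → j a < j b) :=
          mem_filter.mpr ⟨mem_univ _, fun a b h => by
            exact absurd h (by rw [Fin.lt_def]; omega)⟩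
        exact (inf'_le _ hmem).trans (le_of_eq (sup'_const _ _))
      · obtain ⟨u, hu, hus⟩ := osWitness (k := k) (N := n) hk1 (by omega) f'
          ⟨⟨0, by omega⟩, mem_univ _⟩
        set j : Fin (k + 1) → Fin (n + 1) := fun i =>
          if h : i.1 < k then ⟨(u ⟨i.1, h⟩).1, by omega⟩ else ⟨n, by omega⟩ with hj
        have hmem : j ∈ univ.filter (fun j : Fin (k + 1) → Fin (n + 1) =>
            ∀ a b : Fin (k + 1), a < b → j a < j b) := by
          refine mem_filter.mpr ⟨mem_univ _, fun a b h => ?_⟩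
          rw [Fin.lt_def] at h ⊢
          by_cases hb : b.1 < k
          · have ha : a.1 < k := by omega
            simp only [hj, dif_pos ha, dif_pos hb]
            exact hu (show (⟨a.1, ha⟩ : Fin k) < ⟨b.1, hb⟩ from by rw [Fin.lt_def]; exact h)
          · have ha : a.1 < k := by omega
            simp only [hj, dif_pos ha, dif_neg hb]
            exact (u ⟨a.1, ha⟩).isLt
        refine (inf'_le _ hmem).trans (sup'_le _ _ fun i _ => ?_)
        by_cases hi : i.1 < k
        · have h5 : f (j i) = f' (u ⟨i.1, hi⟩) := by
            simp only [hj, dif_pos hi]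
            rfl
          rw [h5]
          refine le_trans ?_ hle
          rw [← hus]
          exact le_sup' (fun i' => f' (u i')) (mem_univ _)
        · have h5 : f (j i) = f ⟨n, by omega⟩ := by simp only [hj, dif_neg hi]
          rw [h5]
  · apply le_inf'
    intro j hj
    rw [mem_filter] at hj
    by_cases hx : ∃ i, (j i).1 = n
    · obtain ⟨i, hi⟩ := hx
      refine inf_le_right.trans ?_
      have h6 : f ⟨n, by omega⟩ = f (j i) := congrArg f (Fin.ext (by simp [hi])).symm
      rw [h6]
      exact le_sup' (fun i => f (j i)) (mem_univ i)
    · push_neg at hx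
      have hlt : ∀ i, (j i).1 < n := fun i => by
        have := (j i).isLt
        have := hx i
        omega
      have hstr : StrictMono j := fun a b h => hj.2 a b h
      have hpig := osPigeon (k := k + 1) (by omega) (by omega) f'
        (fun i => ⟨(j i).1, hlt i⟩)
        (fun a b hab => hstr.injective (Fin.ext (by
          simpa only [Fin.mk.injEq] using hab))) H2
      have hidx'' : (⟨k + 1 - 1, by omega⟩ : Fin n) = ⟨k, hkn⟩ := Fin.ext (by simp)
      rw [hidx''] at hpig
      refine inf_le_left.trans (hpig.trans (le_of_eq ?_))
      apply sup'_congr _ rfl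
      intro i _
      rfl

/-- In the `G/G/m` queue, the departure times satisfy the explicit recursion
`D k = (⋀_{1 ≤ j₁ < ⋯ < j_k ≤ k+m-2} (C j₁ ⊔ ⋯ ⊔ C j_k)) ⊓ C (k+m-1)` (the empty
minimum, occurring when `m = 1`, being `⊤` in `WithTop ℝ`); that is, the `k`-th
smallest element of `{C 1, …, C (k+m-1)}` equals the minimum of the `k`-th
smallest element of `{C 1, …, C (k+m-2)}` and `C (k+m-1)`. -/
theorem stmt5 (m : ℕ) (hm : 1 ≤ m) (α τ A C D : ℕ → ℝ)
    (hα : ∀ k, 1 ≤ k → 0 ≤ α k) (hτ : ∀ k, 1 ≤ k → 0 < τ k)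
    (hA0 : A 0 = 0) (hA : ∀ k, 1 ≤ k → A k = A (k - 1) + α k)
    (hD0 : D 0 = 0)
    (hC : ∀ k, 1 ≤ k → C k = (A k ⊔ D (k - m)) + τ k)
    (hD : ∀ k (hk : 1 ≤ k),
      D k = orderStat (fun i : Fin (k + m - 1) => C (i.1 + 1)) ⟨k - 1, by omega⟩) :
    (∀ k (hk : 1 ≤ k),
      (D k : WithTop ℝ) =
        ((Finset.univ.filter
            (fun j : Fin k → Fin (k + m - 2) => ∀ a b : Fin k, a < b → j a < j b)).inf
          (fun j => ((Finset.univ.sup' ⟨⟨0, by omega⟩, Finset.mem_univ _⟩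
            (fun i => C ((j i).1 + 1)) : ℝ) : WithTop ℝ)))
        ⊓ (C (k + m - 1) : WithTop ℝ))
    ∧ (∀ k (hk : 1 ≤ k) (hm2 : 2 ≤ m),
      D k = orderStat (fun i : Fin (k + m - 2) => C (i.1 + 1)) ⟨k - 1, by omega⟩
              ⊓ C (k + m - 1)) := by
  have part2 : ∀ k (hk : 1 ≤ k) (hm2 : 2 ≤ m),
      D k = orderStat (fun i : Fin (k + m - 2) => C (i.1 + 1)) ⟨k - 1, by omega⟩
              ⊓ C (k + m - 1) := by
    intro k hk hm2
    have hCD : ∀ hk2 : 2 ≤ k, D (k - 1) ≤ C (k + m - 1) := by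
      intro hk2
      rw [hC (k + m - 1) (by omega)]
      have he : k + m - 1 - m = k - 1 := by omega
      rw [he]
      have h1 := hτ (k + m - 1) (by omega)
      have h2 : D (k - 1) ≤ A (k + m - 1) ⊔ D (k - 1) := le_max_right _ _
      linarith
    rw [hD k hk]
    rw [osCongr (show k + m - 1 = (k + m - 2) + 1 by omega) C (k - 1) (by omega) (by omega)]
    rw [osIns rfl (fun i : Fin ((k + m - 2) + 1) => C (i.1 + 1)) (k - 1)
      (show k - 1 < k + m - 2 by omega) ?hyp]
    · exact congrArg₂ (· ⊓ ·) rfl (congrArg C (show (k + m - 2) + 1 = k + m - 1 by omega))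
    case hyp =>
      rcases Nat.lt_or_ge k 2 with hk2 | hk2
      · left; omega
      · right
        refine ⟨by omega, ?_⟩
        show orderStat (fun i : Fin (k + m - 2) => C (i.1 + 1)) ⟨k - 1 - 1, _⟩
          ≤ C ((k + m - 2) + 1)
        rw [show (k + m - 2) + 1 = k + m - 1 from by omega]
        have h2 := hD (k - 1) (by omega)
        rw [osCongr (show (k - 1) + m - 1 = k + m - 2 by omega) C (k - 1 - 1)
          (by omega) (by omega)] at h2
        rw [← h2]
        exact hCD hk2
  refine ⟨?_, fun k hk hm2 => part2 k hk hm2⟩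
  intro k hk
  rcases eq_or_lt_of_le hm with hm1 | hm2
  · -- m = 1
    have hfilter : (Finset.univ.filter
        (fun j : Fin k → Fin (k + m - 2) => ∀ a b : Fin k, a < b → j a < j b)) = ∅ := by
      rw [Finset.filter_eq_empty_iff]
      intro j _
      intro hmono
      have hinj : Function.Injective j := StrictMono.injective (fun a b h => hmono a b h)
      have := Fintype.card_le_of_injective j hinj
      simp only [Fintype.card_fin] at this
      omega
    rw [hfilter, Finset.inf_empty, top_inf_eq]
    have hkey : ∀ l, 1 ≤ l → ∀ i, 1 ≤ i → i ≤ l → C i ≤ C l := by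
      intro l hl i hi hil
      rcases eq_or_lt_of_le hil with rfl | hlt
      · exact le_refl _
      · have hl2 : 2 ≤ l := by omega
        have hDl : D (l - 1) = univ.sup' ⟨⟨0, by omega⟩, mem_univ _⟩
            (fun i' : Fin (l - 1) => C (i'.1 + 1)) := by
          rw [hD (l - 1) (by omega)]
          rw [osCongr (show (l - 1) + m - 1 = l - 1 by omega) C (l - 1 - 1)
            (by omega) (by omega)]
          exact osLast (by omega) _ _
        have hCi : C i ≤ D (l - 1) := by
          rw [hDl]
          have := le_sup' (f := fun i' : Fin (l - 1) => C (i'.1 + 1))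
            (mem_univ (⟨i - 1, by omega⟩ : Fin (l - 1)))
          rw [show i - 1 + 1 = i from by omega] at this
          exact this
        have h1 := hτ l hl
        have h2 : D (l - 1) ≤ A l ⊔ D (l - 1) := le_max_right _ _
        rw [hC l hl, show l - m = l - 1 from by omega]
        linarith
    have hDC : D k = C (k + m - 1) := by
      rw [show k + m - 1 = k from by omega, hD k hk]
      rw [osCongr (show k + m - 1 = k by omega) C (k - 1) (by omega) (by omega)]
      rw [osLast (by omega) _ ⟨⟨0, by omega⟩, mem_univ _⟩]
      apply le_antisymm
      · apply sup'_le
        intro i _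
        exact hkey k hk (i.1 + 1) (by omega) (by omega)
      · have := le_sup' (f := fun i : Fin k => C (i.1 + 1))
          (mem_univ (⟨k - 1, by omega⟩ : Fin k))
        rw [show k - 1 + 1 = k from by omega] at this
        exact this
    exact_mod_cast hDC
  · -- 2 ≤ m
    have hm2' : 2 ≤ m := hm2
    have H2 : (univ : Finset (Fin k)).Nonempty := ⟨⟨0, by omega⟩, mem_univ _⟩
    have hkN : k ≤ k + m - 2 := by omega
    obtain ⟨w, hw, -⟩ := osWitness (k := k) (N := k + m - 2) hk hkN
      (fun i => C (i.1 + 1)) H2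
    have Hf : (univ.filter (fun j : Fin k → Fin (k + m - 2) =>
        ∀ a b : Fin k, a < b → j a < j b)).Nonempty :=
      ⟨w, mem_filter.mpr ⟨mem_univ _, fun a b h => hw h⟩⟩
    have main := osInf (k := k) (N := k + m - 2) hk hkN (fun i => C (i.1 + 1)) Hf H2
    rw [part2 k hk hm2']
    rw [WithTop.coe_inf]
    congr 1
    rw [← main]
    exact (Finset.coe_inf' Hf _)
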